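/- Let A be a commutative ring, p ∈ A[t] a monic polynomial whose discriminant and constant term are units in A, and m ≥ 1. Set B = A[t]/(p(t)^m) and let u ∈ B be the image of t. Then there exists a unique q ∈ B such that q ≡ 1 modulo the ideal (p(u)) of B and such that p(u · q^{-1}) = 0 in B. (Such q is automatically a unit of B since it is congruent to 1 modulo a nilpotent ideal.) -/

import Mathlib

open Polynomial

private lemma aux_nilp_dvd {B : Type*} [CommRing B] {a b : B} (h : IsNilpotent a)
    (hd : a ∣ b) : IsNilpotent b := by
  obtain ⟨c, rfl⟩ := hd
  obtain ⟨n, hn⟩ := h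
  exact ⟨n, by rw [mul_pow, hn, zero_mul]⟩

private lemma aux_deriv_unit {B : Type*} [CommRing B] (P : B[X]) (hsep : P.Separable)
    (v : B) (hv : IsNilpotent (P.eval v)) : IsUnit (P.derivative.eval v) := by
  obtain ⟨a, b, hab⟩ := hsep
  have h1 : a.eval v * P.eval v + b.eval v * P.derivative.eval v = 1 := by
    have := congrArg (Polynomial.eval v) hab
    simpa using this
  have hnil : IsNilpotent (a.eval v * P.eval v) := by
    obtain ⟨n, hn⟩ := hv
    exact ⟨n, by rw [mul_pow, hn, mul_zero]⟩
  have hu : IsUnit (b.eval v * P.derivative.eval v) := by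
    have h2 : b.eval v * P.derivative.eval v = 1 - a.eval v * P.eval v := by
      linear_combination h1
    rw [h2]
    exact hnil.isUnit_one_sub
  exact isUnit_of_mul_isUnit_right hu

/-- Hensel's lemma for a nilpotent "ideal": if `P.eval u` is nilpotent and `P` is
separable, there is a unique root of `P` congruent to `u` modulo `P.eval u`. -/
private lemma aux_hensel {B : Type*} [CommRing B] (P : B[X]) (hsep : P.Separable)
    (u : B) (hnil : IsNilpotent (P.eval u)) :
    ∃! v : B, P.eval v = 0 ∧ P.eval u ∣ v - u := by
  set π := P.eval u with hπ
  obtain ⟨m, hm0⟩ := hnil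
  have sub_dvd : ∀ x y : B, (x - y) ∣ (P.eval x - P.eval y) := by
    intro x y
    obtain ⟨z, hz⟩ := P.evalSubFactor x y
    exact ⟨z, by linear_combination hz⟩
  have keydvd : ∀ v : B, π ∣ v - u → π ∣ P.eval v := by
    intro v hv
    have h2 : π ∣ P.eval v - P.eval u := hv.trans (sub_dvd v u)
    have : P.eval v = (P.eval v - P.eval u) + π := by ring
    rw [this]
    exact dvd_add h2 dvd_rfl
  have keynil : ∀ v : B, π ∣ v - u → IsNilpotent (P.eval v) := fun v hv =>
    aux_nilp_dvd ⟨m, hm0⟩ (keydvd v hv)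
  have keyunit : ∀ v : B, π ∣ v - u → IsUnit (P.derivative.eval v) := fun v hv =>
    aux_deriv_unit P hsep v (keynil v hv)
  -- existence by Newton iteration
  have main : ∀ n : ℕ, ∃ v : B, π ^ (n + 1) ∣ P.eval v ∧ π ∣ v - u := by
    intro n
    induction n with
    | zero => exact ⟨u, by rw [zero_add, pow_one], by simp⟩
    | succ n ih =>
      obtain ⟨v, hPv, hvu⟩ := ih
      have hπdvd : π ∣ P.eval v := dvd_trans (dvd_pow_self π (Nat.succ_ne_zero n)) hPv
      obtain ⟨w, hw⟩ := (keyunit v hvu).exists_left_inv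
      set h : B := -(P.eval v * w) with hh
      refine ⟨v + h, ?_, ?_⟩
      · obtain ⟨k, hk⟩ := P.binomExpansion v h
        have hPv' : P.eval (v + h) = k * h ^ 2 := by
          rw [hk, hh]
          have : w * P.derivative.eval v = 1 := hw
          linear_combination (-P.eval v) * this
        rw [hPv']
        have : π ^ (n + 1 + 1) ∣ h ^ 2 := by
          have h1 : π ^ (n + 1) ∣ h := by
            rw [hh]
            exact dvd_neg.mpr (hPv.mul_right w)
          calc π ^ (n + 1 + 1) ∣ (π ^ (n+1)) ^ 2 := by
                rw [← pow_mul]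
                exact pow_dvd_pow π (by omega)
            _ ∣ h ^ 2 := pow_dvd_pow_of_dvd h1 2
        exact this.mul_left k
      · have : v + h - u = (v - u) + h := by ring
        rw [this]
        exact dvd_add hvu ((dvd_neg.mpr (hπdvd.mul_right w)))
  obtain ⟨v, hPv, hvu⟩ := main m
  have hPv0 : P.eval v = 0 := by
    obtain ⟨c, hc⟩ := hPv
    rw [hc, pow_succ, hm0, zero_mul, zero_mul]
  refine ⟨v, ⟨hPv0, hvu⟩, ?_⟩
  rintro v' ⟨hPv'0, hv'u⟩
  -- uniqueness
  have hdvd : π ∣ v' - v := by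
    have : v' - v = (v' - u) - (v - u) := by ring
    rw [this]
    exact dvd_sub hv'u hvu
  have hnilh : IsNilpotent (v' - v) := aux_nilp_dvd ⟨m, hm0⟩ hdvd
  obtain ⟨k, hk⟩ := P.binomExpansion v (v' - v)
  have heq : (v' - v) * (P.derivative.eval v + k * (v' - v)) = 0 := by
    have h2 : v + (v' - v) = v' := by ring
    rw [h2] at hk
    rw [hPv'0, hPv0] at hk
    linear_combination -hk
  have hunit : IsUnit (P.derivative.eval v + k * (v' - v)) := by
    have : IsNilpotent (k * (v' - v)) := by
      obtain ⟨n, hn⟩ := hnilh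
      exact ⟨n, by rw [mul_pow, hn, mul_zero]⟩
    exact this.isUnit_add_left_of_commute (keyunit v hvu) (Commute.all _ _)
  have : v' - v = 0 := by
    obtain ⟨w, hw⟩ := hunit.exists_right_inv
    calc v' - v = (v' - v) * ((P.derivative.eval v + k * (v' - v)) * w) := by rw [hw, mul_one]
      _ = ((v' - v) * (P.derivative.eval v + k * (v' - v))) * w := by ring
      _ = 0 := by rw [heq, zero_mul]
  exact sub_eq_zero.mp this

theorem exists_unique_unipotent_twist
    {A : Type*} [CommRing A] (p : Polynomial A) (hmonic : p.Monic)
    (hsep : p.Separable) (hconst : IsUnit (p.coeff 0)) (m : ℕ) (hm : 1 ≤ m) :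
    ∃! q : Polynomial A ⧸ Ideal.span {p ^ m},
      ∃ hq : IsUnit q,
        q - 1 ∈ Ideal.span {Polynomial.aeval
            (Ideal.Quotient.mk (Ideal.span {p ^ m}) Polynomial.X) p} ∧
        Polynomial.aeval
          ((Ideal.Quotient.mk (Ideal.span {p ^ m}) Polynomial.X) * ((hq.unit⁻¹ : _ˣ) : Polynomial A ⧸ Ideal.span {p ^ m})) p = 0 := by
  set I : Ideal (Polynomial A) := Ideal.span {p ^ m} with hI
  set u : Polynomial A ⧸ I := Ideal.Quotient.mk I Polynomial.X with hu
  set P : Polynomial (Polynomial A ⧸ I) := p.map (algebraMap A _) with hP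
  have haev : ∀ x : Polynomial A ⧸ I, Polynomial.aeval x p = P.eval x := fun x => by
    rw [hP, Polynomial.eval_map, Polynomial.aeval_def]
  have hPsep : P.Separable := hsep.map
  have hupi : P.eval u = Ideal.Quotient.mk I p := by
    rw [← haev]
    have h := Polynomial.aeval_algHom_apply (Ideal.Quotient.mkₐ A I) Polynomial.X p
    simpa using h
  have hπnil : IsNilpotent (P.eval u) := by
    refine ⟨m, ?_⟩
    rw [hupi, ← map_pow]
    exact Ideal.Quotient.eq_zero_iff_mem.mpr (Ideal.subset_span rfl)
  -- `u` is a unit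
  have hc : IsUnit (algebraMap A (Polynomial A ⧸ I) (p.coeff 0)) := hconst.map _
  have hud : u * Polynomial.aeval u p.divX
      = P.eval u - algebraMap A (Polynomial A ⧸ I) (p.coeff 0) := by
    have h0 := congrArg (Polynomial.aeval u) p.X_mul_divX_add
    rw [map_add, map_mul, Polynomial.aeval_X, Polynomial.aeval_C, haev] at h0
    linear_combination h0
  have hUu : IsUnit u := by
    have hrhs : IsUnit (P.eval u - algebraMap A (Polynomial A ⧸ I) (p.coeff 0)) := by
      have h1 : IsUnit (algebraMap A (Polynomial A ⧸ I) (p.coeff 0) + -(P.eval u)) :=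
        hπnil.neg.isUnit_add_left_of_commute hc (Commute.all _ _)
      have h2 : P.eval u - algebraMap A (Polynomial A ⧸ I) (p.coeff 0)
          = -(algebraMap A (Polynomial A ⧸ I) (p.coeff 0) + -(P.eval u)) := by ring
      rw [h2]
      exact h1.neg
    rw [← hud] at hrhs
    exact isUnit_of_mul_isUnit_left hrhs
  -- Hensel
  obtain ⟨v, ⟨hv0, hvu⟩, hvuniq⟩ := aux_hensel P hPsep u hπnil
  have hUv : IsUnit v := by
    have hn : IsNilpotent (v - u) := aux_nilp_dvd hπnil hvu
    have h1 : IsUnit (u + (v - u)) := hn.isUnit_add_left_of_commute hUu (Commute.all _ _)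
    simpa using h1
  obtain ⟨V, hV⟩ := hUv
  have hq : IsUnit (u * (↑V⁻¹ : Polynomial A ⧸ I)) := hUu.mul (Units.isUnit _)
  refine ⟨u * (↑V⁻¹ : Polynomial A ⧸ I), ⟨hq, ?_, ?_⟩, ?_⟩
  · -- q - 1 ∈ (p(u))
    rw [Ideal.mem_span_singleton, haev]
    have h1 : u * (↑V⁻¹ : Polynomial A ⧸ I) - 1 = (u - v) * ↑V⁻¹ := by
      have h2 : v * (↑V⁻¹ : Polynomial A ⧸ I) = 1 := by rw [← hV]; exact V.mul_inv
      linear_combination h2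
    rw [h1]
    have h3 : P.eval u ∣ u - v := by
      have := dvd_neg.mpr hvu
      rwa [neg_sub] at this
    exact h3.mul_right _
  · -- p(u q⁻¹) = 0
    have hqv : (u * (↑V⁻¹ : Polynomial A ⧸ I)) * v = u := by
      rw [mul_assoc, ← hV, V.inv_mul, mul_one]
    have huq : u * ((hq.unit⁻¹ : _ˣ) : Polynomial A ⧸ I) = v := by
      calc u * ((hq.unit⁻¹ : _ˣ) : Polynomial A ⧸ I)
          = ((u * ↑V⁻¹) * v) * ((hq.unit⁻¹ : _ˣ) : Polynomial A ⧸ I) := by rw [hqv]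
        _ = v * ((u * ↑V⁻¹) * ((hq.unit⁻¹ : _ˣ) : Polynomial A ⧸ I)) := by ring
        _ = v * 1 := by rw [hq.mul_val_inv]
        _ = v := mul_one v
    rw [huq, haev]
    exact hv0
  · -- uniqueness
    rintro q' ⟨hq', hmem, hroot⟩
    set v' : Polynomial A ⧸ I := u * ((hq'.unit⁻¹ : _ˣ) : Polynomial A ⧸ I) with hv'
    have hroot' : P.eval v' = 0 := by rw [← haev]; exact hroot
    have hv'u : P.eval u ∣ v' - u := by
      have hinv : ((hq'.unit⁻¹ : _ˣ) : Polynomial A ⧸ I) * q' = 1 := hq'.val_inv_mul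
      have h1 : v' - u = (u * ((hq'.unit⁻¹ : _ˣ) : Polynomial A ⧸ I)) * (1 - q') := by
        rw [hv']
        linear_combination u * hinv
      rw [h1]
      have h2 : P.eval u ∣ 1 - q' := by
        have h3 : P.eval u ∣ q' - 1 := by rw [← haev]; exact Ideal.mem_span_singleton.mp hmem
        have := dvd_neg.mpr h3
        rwa [neg_sub] at this
      exact h2.mul_left _
    have hveq : v' = v := hvuniq v' ⟨hroot', hv'u⟩
    have hq'v : q' * v = u := by
      rw [← hveq, hv']
      linear_combination u * hq'.mul_val_inv
    calc q' = q' * (v * ↑V⁻¹) := by rw [← hV, V.mul_inv, mul_one]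
      _ = (q' * v) * ↑V⁻¹ := by ring
      _ = u * ↑V⁻¹ := by rw [hq'v]
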